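/- arXiv:1404.3593 — 4 statements merged into one kernel-verified Lean document; each statement's English description precedes it below -/
import Mathlib

section
/- Let V = {v^{(1)}, …, v^{(l)}} ⊂ (ℂ*)^n be a finite set. Then there exist finitely many polynomials h_1, …, h_m, each of degree at most l and each vanishing on V, such that the intersection of the amoebas of h_1, …, h_m equals Log(V) = {Log(v^{(1)}), …, Log(v^{(l)})}. -/
open Finset

noncomputable def Log {n : ℕ} (z : Fin n → ℂ) : Fin n → ℝ :=
  fun k => Real.log ‖z k‖

/-- The amoeba of a multivariate polynomial: the image under `Log` of its zero set in `(ℂ*)^n`. -/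
noncomputable def amoebaP {n : ℕ} (p : MvPolynomial (Fin n) ℂ) : Set (Fin n → ℝ) :=
  Log '' {z | (∀ k, z k ≠ 0) ∧ MvPolynomial.eval z p = 0}

theorem finite_amoeba_basis {n l : ℕ} (v : Fin l → Fin n → ℂ)
    (hv : ∀ i k, v i k ≠ 0) :
    ∃ (m : ℕ) (h : Fin m → MvPolynomial (Fin n) ℂ),
      (∀ s, (h s).totalDegree ≤ l) ∧
      (∀ s i, MvPolynomial.eval (v i) (h s) = 0) ∧
      (⋂ s, amoebaP (h s)) = Set.range (fun i => Log (v i)) := by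
  classical
  set g : (Fin l → Fin n) → MvPolynomial (Fin n) ℂ :=
    fun f => ∏ i : Fin l, (MvPolynomial.X (f i) - MvPolynomial.C (v i (f i))) with hg
  set e := Fintype.equivFin (Fin l → Fin n) with he
  have hvanish : ∀ f i, MvPolynomial.eval (v i) (g f) = 0 := by
    intro f i
    rw [hg]
    simp only [MvPolynomial.eval_prod]
    refine Finset.prod_eq_zero (Finset.mem_univ i) ?_
    simp
  refine ⟨Fintype.card (Fin l → Fin n), fun s => g (e.symm s), ?_, ?_, ?_⟩
  · intro s
    refine le_trans (MvPolynomial.totalDegree_finset_prod _ _) ?_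
    have hb : ∀ i : Fin l,
        (MvPolynomial.X ((e.symm s) i) - MvPolynomial.C (v i ((e.symm s) i)) :
          MvPolynomial (Fin n) ℂ).totalDegree ≤ 1 := by
      intro i
      refine le_trans (MvPolynomial.totalDegree_sub _ _) ?_
      simp [MvPolynomial.totalDegree_X]
    calc ∑ i : Fin l, (MvPolynomial.X ((e.symm s) i)
          - MvPolynomial.C (v i ((e.symm s) i)) : MvPolynomial (Fin n) ℂ).totalDegree
        ≤ ∑ _i : Fin l, 1 := Finset.sum_le_sum (fun i _ => hb i)
      _ = l := by simp
  · intro s i; exact hvanish _ i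
  · ext x
    simp only [Set.mem_iInter, Set.mem_range]
    constructor
    · intro hx
      by_contra hc
      push_neg at hc
      have hk : ∀ i, ∃ k, x k ≠ Real.log ‖v i k‖ := by
        intro i
        by_contra h'
        push_neg at h'
        exact hc i (funext fun k => (h' k).symm)
      choose k hk using hk
      obtain ⟨z, ⟨hz0, hz⟩, hzx⟩ := hx (e (fun i => k i))
      rw [Equiv.symm_apply_apply] at hz
      rw [hg] at hz
      simp only [MvPolynomial.eval_prod] at hz
      obtain ⟨i, -, hi⟩ := Finset.prod_eq_zero_iff.mp hz
      simp only [map_sub, MvPolynomial.eval_X, MvPolynomial.eval_C, sub_eq_zero] at hi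
      apply hk i
      rw [← hzx]
      simp [Log, hi]
    · rintro ⟨i, rfl⟩ s
      exact ⟨v i, ⟨hv i, hvanish _ i⟩, rfl⟩
end

section
/- Let V = {v^{(1)}, …, v^{(l)}} ⊂ (ℂ*)^n be a finite set with l ≥ 1. Then there exist at most (n+1)(n^{l−1}+1) polynomials, each of degree at most l, whose amoebas intersect exactly in Log(V). -/
open Finset

theorem finite_amoeba_basis_bound {n l : ℕ} (hl : 1 ≤ l) (v : Fin l → Fin n → ℂ)
    (hv : ∀ i k, v i k ≠ 0) :
    ∃ (m : ℕ) (h : Fin m → MvPolynomial (Fin n) ℂ),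
      m ≤ (n + 1) * (n ^ (l - 1) + 1) ∧
      (∀ s, (h s).totalDegree ≤ l) ∧
      (⋂ s, amoebaP (h s)) = Set.range (fun i => Log (v i)) := by
  classical
  obtain ⟨E⟩ : Nonempty (Fin (n ^ l) ≃ (Fin l → Fin n)) := by
    refine ⟨Fintype.equivOfCardEq ?_⟩
    simp
  set p : (Fin l → Fin n) → MvPolynomial (Fin n) ℂ :=
    fun e => ∏ i : Fin l, (MvPolynomial.X (e i) - MvPolynomial.C (v i (e i))) with hp
  refine ⟨n ^ l, fun s => p (E s), ?_, ?_, ?_⟩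
  · calc n ^ l = n * n ^ (l - 1) := by
          conv_lhs => rw [← Nat.sub_add_cancel hl]
          rw [pow_succ, mul_comm]
        _ ≤ (n + 1) * (n ^ (l - 1) + 1) :=
          Nat.mul_le_mul (Nat.le_succ n) (Nat.le_succ _)
  · intro s
    refine (MvPolynomial.totalDegree_finset_prod _ _).trans ?_
    have : ∀ i : Fin l,
        (MvPolynomial.X (E s i) - MvPolynomial.C (v i (E s i)) :
          MvPolynomial (Fin n) ℂ).totalDegree ≤ 1 := by
      intro i
      refine le_trans (MvPolynomial.totalDegree_sub _ _) ?_
      simp [MvPolynomial.totalDegree_X, MvPolynomial.totalDegree_C]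
    calc ∑ i : Fin l, (MvPolynomial.X (E s i) - MvPolynomial.C (v i (E s i)) :
            MvPolynomial (Fin n) ℂ).totalDegree
        ≤ ∑ _i : Fin l, 1 := Finset.sum_le_sum fun i _ => this i
      _ = l := by simp
  · ext x
    simp only [Set.mem_iInter, Set.mem_range]
    constructor
    · intro hx
      by_contra hxr
      push_neg at hxr
      -- for each i, choose a coordinate where x differs from Log (v i)
      have hchoice : ∀ i : Fin l, ∃ k : Fin n, x k ≠ Real.log ‖v i k‖ := by
        intro i
        by_contra hc
        push_neg at hc
        exact hxr i (by funext k; exact (hc k).symm)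
      choose e he using hchoice
      obtain ⟨z, ⟨hz0, hzeval⟩, hLog⟩ := hx (E.symm e)
      rw [Equiv.apply_symm_apply] at hzeval
      rw [hp] at hzeval
      simp only [map_prod, map_sub, MvPolynomial.eval_X, MvPolynomial.eval_C] at hzeval
      obtain ⟨i, -, hi⟩ := Finset.prod_eq_zero_iff.mp hzeval
      have hz : z (e i) = v i (e i) := by linear_combination hi
      apply he i
      rw [← hLog]
      simp [Log, hz]
    · rintro ⟨i, rfl⟩ s
      refine ⟨v i, ⟨hv i, ?_⟩, rfl⟩
      rw [hp]
      simp only [map_prod, map_sub, MvPolynomial.eval_X, MvPolynomial.eval_C]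
      exact Finset.prod_eq_zero (Finset.mem_univ i) (by simp)
end

section
/- Let w ∈ ℝ^n and let V = {v^{(1)},…,v^{(l)}} ⊂ (ℂ*)^n with associated affine polynomials g_j^{(i)} (0 ≤ j ≤ n, 1 ≤ i ≤ l). If w ∉ Log(V), then for every i ∈ {1,…,l} there exists j ∈ {0,1,…,n} such that w is not in the amoeba of g_j^{(i)}. -/
open Finset

/-- The amoeba of a polynomial function on the complex torus:
the image under `Log` of its zero set in `(ℂ*)^n`. -/
noncomputable def amoeba {n : ℕ} (f : (Fin n → ℂ) → ℂ) : Set (Fin n → ℝ) :=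
  Log '' {z | (∀ k, z k ≠ 0) ∧ f z = 0}

/-- `‖v‖₀ = ∑ₖ |vₖ|`. -/
noncomputable def norm0 {n : ℕ} (v : Fin n → ℂ) : ℝ := ∑ k, ‖v k‖

/-- `g₀(z) = 1 - (1/‖v‖₀) ∑ₖ (|vₖ|/vₖ) zₖ`, the polynomial of Nisse's construction. -/
noncomputable def gzero {n : ℕ} (v : Fin n → ℂ) : (Fin n → ℂ) → ℂ :=
  fun z => 1 - (1 / (norm0 v : ℂ)) * ∑ k, ((‖v k‖ : ℂ) / v k) * z k

/-- `gⱼ(z) = 1 - ((1+‖v‖₀-|vⱼ|)/vⱼ) zⱼ + ∑_{k≠j} (|vₖ|/vₖ) zₖ`, for `1 ≤ j ≤ n`. -/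
noncomputable def gj {n : ℕ} (v : Fin n → ℂ) (j : Fin n) : (Fin n → ℂ) → ℂ :=
  fun z => 1 - (((1 + norm0 v - ‖v j‖ : ℝ) : ℂ) / v j) * z j
    + ∑ k ∈ Finset.univ.erase j, ((‖v k‖ : ℂ) / v k) * z k

/-- The family `g₀, g₁, …, gₙ` of the `n+1` affine polynomials associated to `v`. -/
noncomputable def gfam {n : ℕ} (v : Fin n → ℂ) : Fin (n + 1) → (Fin n → ℂ) → ℂ :=
  Fin.cases (gzero v) (gj v)

lemma key {n : ℕ} (u : Fin n → ℂ) (hu : ∀ k, u k ≠ 0) (w : Fin n → ℝ)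
    (h : ∀ j : Fin (n+1), w ∈ amoeba (gfam u j)) : Log u = w := by
  set a : Fin n → ℝ := fun k => ‖u k‖ with ha
  set r : Fin n → ℝ := fun k => Real.exp (w k) with hr
  have hapos : ∀ k, 0 < a k := fun k => norm_pos_iff.mpr (hu k)
  have hrpos : ∀ k, 0 < r k := fun k => Real.exp_pos _
  set S : ℝ := ∑ k, a k with hS
  set R : ℝ := ∑ k, r k with hR
  -- Modulus of terms
  have habs : ∀ (z : Fin n → ℂ), (∀ k, z k ≠ 0) → Log z = w → ∀ k, ‖z k‖ = r k := by
    intro z hz0 hz k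
    have h1 : Real.log (‖z k‖) = w k := congrFun hz k
    show ‖z k‖ = Real.exp (w k)
    rw [← h1, Real.exp_log (norm_pos_iff.mpr (hz0 k))]
  have hterm : ∀ (z : Fin n → ℂ), (∀ k, z k ≠ 0) → Log z = w → ∀ k,
      ‖((a k : ℂ) / u k) * z k‖ = r k := by
    intro z hz0 hz k
    rw [norm_mul, norm_div, Complex.norm_real, Real.norm_eq_abs, abs_of_pos (hapos k), habs z hz0 hz k,
      div_self (hapos k).ne', one_mul]
  -- Step A : S ≤ R
  have hSR : S ≤ R := by
    obtain ⟨z, ⟨hz0, hzeq⟩, hzw⟩ := h 0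
    have hg : gzero u z = 0 := hzeq
    unfold gzero at hg
    have hg1 : (1 / (norm0 u : ℂ)) * ∑ k, ((‖u k‖ : ℂ) / u k) * z k = 1 := by
      linear_combination -hg
    have hSne : (norm0 u : ℂ) ≠ 0 := by
      intro h0
      rw [h0] at hg1
      simp at hg1
    have hsum : ∑ k, ((a k : ℂ) / u k) * z k = (S : ℂ) := by
      field_simp at hg1
      simp only [div_mul_eq_mul_div]
      exact hg1
    have : (S : ℝ) = ‖∑ k, ((a k : ℂ) / u k) * z k‖ := by
      rw [hsum, Complex.norm_real, Real.norm_eq_abs, abs_of_nonneg]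
      positivity
    rw [this]
    calc ‖∑ k, ((a k : ℂ) / u k) * z k‖
        ≤ ∑ k, ‖((a k : ℂ) / u k) * z k‖ := norm_sum_le _ _
      _ = ∑ k, r k := by exact Finset.sum_congr rfl fun k _ => hterm z hz0 hzw k
  -- Step B
  have hB : ∀ j : Fin n, (1 + S) * r j ≤ a j * (1 + R) := by
    intro j
    obtain ⟨z, ⟨hz0, hzeq⟩, hzw⟩ := h j.succ
    have hg : gj u j z = 0 := by
      have : gfam u j.succ = gj u j := by simp [gfam]
      rwa [this] at hzeq
    unfold gj at hg
    have hcz : (((1 + norm0 u - ‖u j‖ : ℝ) : ℂ) / u j) * z j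
        = 1 + ∑ k ∈ Finset.univ.erase j, ((‖u k‖ : ℂ) / u k) * z k := by
      linear_combination -hg
    have haj : a j ≤ S := Finset.single_le_sum (fun k _ => (hapos k).le) (mem_univ j)
    have hc : ‖(((1 + norm0 u - ‖u j‖ : ℝ) : ℂ) / u j) * z j‖
        = (1 + S - a j) / a j * r j := by
      rw [norm_mul, norm_div, Complex.norm_real, Real.norm_eq_abs, habs z hz0 hzw j]
      congr 1
      rw [abs_of_nonneg (by simp only [norm0]; rw [← hS]; linarith)]
      rfl
    have hrhs : ‖1 + ∑ k ∈ Finset.univ.erase j, ((‖u k‖ : ℂ) / u k) * z k‖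
        ≤ 1 + (R - r j) := by
      calc ‖1 + ∑ k ∈ Finset.univ.erase j, ((‖u k‖ : ℂ) / u k) * z k‖
          ≤ ‖(1:ℂ)‖ + ‖∑ k ∈ Finset.univ.erase j, ((‖u k‖ : ℂ) / u k) * z k‖ := norm_add_le _ _
        _ ≤ 1 + ∑ k ∈ Finset.univ.erase j, ‖((‖u k‖ : ℂ) / u k) * z k‖ := by
            simp only [norm_one]
            exact add_le_add le_rfl (norm_sum_le _ _)
        _ = 1 + ∑ k ∈ Finset.univ.erase j, r k := by
            rw [Finset.sum_congr rfl fun k _ => hterm z hz0 hzw k]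
        _ = 1 + (R - r j) := by
            rw [hR, ← Finset.sum_erase_add _ _ (mem_univ j)]
            ring
    have hineq : (1 + S - a j) / a j * r j ≤ 1 + (R - r j) := by
      rw [← hc, hcz]; exact hrhs
    rw [div_mul_eq_mul_div, div_le_iff₀ (hapos j)] at hineq
    nlinarith [hrpos j, hapos j]
  -- Step C : R ≤ S
  have hRS : R ≤ S := by
    have hsum : ∑ j, (1 + S) * r j ≤ ∑ j, a j * (1 + R) :=
      Finset.sum_le_sum fun j _ => hB j
    rw [← Finset.mul_sum, ← Finset.sum_mul, ← hR, ← hS] at hsum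
    nlinarith [Finset.sum_nonneg (fun k (_ : k ∈ univ) => (hrpos k).le), hSR]
  have hReqS : R = S := le_antisymm hRS hSR
  -- termwise equality
  have heq : ∀ j ∈ univ, (1 + S) * r j = a j * (1 + R) := by
    have hsum : ∑ j, (1 + S) * r j = ∑ j, a j * (1 + R) := by
      rw [← Finset.mul_sum, ← Finset.sum_mul, ← hR, ← hS, hReqS]; ring
    exact (Finset.sum_eq_sum_iff_of_le (fun j _ => hB j)).mp hsum
  have hra : ∀ j, r j = a j := by
    intro j
    have := heq j (mem_univ j)
    have hpos : 0 < 1 + S := by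
      have : 0 ≤ S := Finset.sum_nonneg fun k _ => (hapos k).le
      linarith
    rw [hReqS] at this
    nlinarith
  funext k
  show Real.log (a k) = w k
  rw [← hra k, hr]
  exact Real.log_exp _

theorem lemmaA {n l : ℕ} (v : Fin l → Fin n → ℂ) (hv : ∀ i k, v i k ≠ 0)
    (w : Fin n → ℝ) (hw : w ∉ Set.range (fun i => Log (v i))) :
    ∀ i : Fin l, ∃ j : Fin (n + 1), w ∉ amoeba (gfam (v i) j) := by
  intro i
  by_contra h
  push_neg at h
  exact hw ⟨i, key (v i) (hv i) w h⟩
end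

section
/- Let V = {v^{(1)}, v^{(2)}} ⊂ (ℂ*)^2 be two points with associated affine polynomials g_j^{(i)} for j ∈ {0,1,2}, i ∈ {1,2}. Then the family of nine degree-two polynomials {g_j^{(1)} g_r^{(2)} : j, r ∈ {0,1,2}} has the property that the intersection of their amoebas equals {Log(v^{(1)}), Log(v^{(2)})}, and each of these polynomials vanishes on V. -/
open Finset

lemma norm0_pos {v : Fin 2 → ℂ} (hv : ∀ k, v k ≠ 0) : 0 < norm0 v := by
  have h0 := norm_pos_iff.mpr (hv 0)
  have h1 := norm_pos_iff.mpr (hv 1)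
  unfold norm0; rw [Fin.sum_univ_two]; linarith

lemma gzero_root {v : Fin 2 → ℂ} (hv : ∀ k, v k ≠ 0) : gzero v v = 0 := by
  have hs : (norm0 v : ℂ) ≠ 0 := by exact_mod_cast (norm0_pos hv).ne'
  unfold gzero
  have h : (∑ k, ((‖v k‖ : ℂ) / v k) * v k) = ((norm0 v : ℝ) : ℂ) := by
    unfold norm0
    rw [Fin.sum_univ_two]
    push_cast
    rw [div_mul_cancel₀ _ (hv 0), div_mul_cancel₀ _ (hv 1), Fin.sum_univ_two]
  rw [h]
  field_simp
  ring

lemma gj_root {v : Fin 2 → ℂ} (hv : ∀ k, v k ≠ 0) (j : Fin 2) : gj v j v = 0 := by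
  unfold gj
  have h : (∑ k ∈ Finset.univ.erase j, ((‖v k‖ : ℂ) / v k) * v k)
      = ((norm0 v : ℝ) : ℂ) - (‖v j‖ : ℂ) := by
    have h1 : (∑ k ∈ Finset.univ.erase j, ((‖v k‖ : ℂ) / v k) * v k)
        = ∑ k ∈ Finset.univ.erase j, ((‖v k‖ : ℝ) : ℂ) := by
      apply Finset.sum_congr rfl
      intro k _
      rw [div_mul_cancel₀ _ (hv k)]
    rw [h1]
    have h2 : (∑ k ∈ Finset.univ.erase j, ((‖v k‖ : ℝ) : ℂ))
        + ((‖v j‖ : ℝ) : ℂ) = ∑ k, ((‖v k‖ : ℝ) : ℂ) :=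
      Finset.sum_erase_add _ _ (Finset.mem_univ j)
    have h3 : (∑ k, ((‖v k‖ : ℝ) : ℂ)) = ((norm0 v : ℝ) : ℂ) := by
      unfold norm0; push_cast; rfl
    rw [h3] at h2
    linear_combination h2
  rw [h, div_mul_cancel₀ _ (hv j)]
  push_cast
  ring

lemma gfam_root {v : Fin 2 → ℂ} (hv : ∀ k, v k ≠ 0) (j : Fin 3) : gfam v j v = 0 := by
  fin_cases j
  · exact gzero_root hv
  · exact gj_root hv 0
  · exact gj_root hv 1

lemma amoeba_mul_subset {n : ℕ} (f g : (Fin n → ℂ) → ℂ) :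
    amoeba (fun z => f z * g z) ⊆ amoeba f ∪ amoeba g := by
  rintro x ⟨z, ⟨hz, hfg⟩, rfl⟩
  rcases mul_eq_zero.mp hfg with h | h
  · exact Or.inl ⟨z, ⟨hz, h⟩, rfl⟩
  · exact Or.inr ⟨z, ⟨hz, h⟩, rfl⟩

lemma abs_coeff {v : Fin 2 → ℂ} (hv : ∀ k, v k ≠ 0) (k : Fin 2) (z : ℂ) :
    ‖((‖v k‖ : ℂ) / v k) * z‖ = ‖z‖ := by
  rw [norm_mul, norm_div, Complex.norm_real, norm_norm,
    div_self (norm_ne_zero_iff.mpr (hv k)), one_mul]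

lemma nisse {v : Fin 2 → ℂ} (hv : ∀ k, v k ≠ 0) (x : Fin 2 → ℝ)
    (h : ∀ j : Fin 3, x ∈ amoeba (gfam v j)) : x = Log v := by
  set a0 := ‖v 0‖ with ha0
  set a1 := ‖v 1‖ with ha1
  have ha0p : 0 < a0 := norm_pos_iff.mpr (hv 0)
  have ha1p : 0 < a1 := norm_pos_iff.mpr (hv 1)
  have hs : norm0 v = a0 + a1 := by unfold norm0; rw [Fin.sum_univ_two]
  set w : Fin 2 → ℝ := fun k => Real.exp (x k) with hw
  have key : ∀ j, ∃ z : Fin 2 → ℂ, (∀ k, ‖z k‖ = w k) ∧ gfam v j z = 0 := by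
    intro j
    obtain ⟨z, ⟨hz, hf⟩, hlog⟩ := h j
    refine ⟨z, fun k => ?_, hf⟩
    have hxk : Real.log (‖z k‖) = x k := congrFun hlog k
    simp only [hw, ← hxk, Real.exp_log (norm_pos_iff.mpr (hz k))]
  have hw0 : 0 < w 0 := Real.exp_pos _
  have hw1 : 0 < w 1 := Real.exp_pos _
  -- Inequality I : a0 + a1 ≤ w 0 + w 1, from g₀.
  have I : a0 + a1 ≤ w 0 + w 1 := by
    obtain ⟨z, hzw, hz0⟩ := key 0
    have hz0' : gzero v z = 0 := hz0
    unfold gzero at hz0'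
    rw [Fin.sum_univ_two] at hz0'
    have hsne : (norm0 v : ℂ) ≠ 0 := by
      exact_mod_cast (norm0_pos hv).ne'
    have hS : ((‖v 0‖ : ℂ) / v 0) * z 0 + ((‖v 1‖ : ℂ) / v 1) * z 1
        = ((norm0 v : ℝ) : ℂ) := by
      field_simp at hz0'
      linear_combination -hz0'
    have habs : ‖((‖v 0‖ : ℂ) / v 0) * z 0
        + ((‖v 1‖ : ℂ) / v 1) * z 1‖ = norm0 v := by
      rw [hS, Complex.norm_real, Real.norm_eq_abs, abs_of_pos (norm0_pos hv)]
    have htri := norm_add_le (((‖v 0‖ : ℂ) / v 0) * z 0)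
      (((‖v 1‖ : ℂ) / v 1) * z 1)
    rw [habs, abs_coeff hv 0, abs_coeff hv 1, hzw 0, hzw 1] at htri
    linarith [htri, hs.symm.le]
  -- Inequality II : (1 + a1) * w 0 ≤ a0 * (1 + w 1), from g₁.
  have II : (1 + a1) * w 0 ≤ a0 * (1 + w 1) := by
    obtain ⟨z, hzw, hz1⟩ := key 1
    have hz1' : gj v 0 z = 0 := hz1
    unfold gj at hz1'
    have her : (Finset.univ.erase (0 : Fin 2)) = {1} := by decide
    rw [her, Finset.sum_singleton] at hz1'
    have heq : (((1 + norm0 v - a0 : ℝ) : ℂ) / v 0) * z 0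
        = 1 + ((‖v 1‖ : ℂ) / v 1) * z 1 := by
      linear_combination -hz1'
    have habsL : ‖(((1 + norm0 v - a0 : ℝ) : ℂ) / v 0) * z 0‖
        = (1 + a1) / a0 * w 0 := by
      rw [norm_mul, norm_div, Complex.norm_real, Real.norm_eq_abs, hzw 0]
      rw [hs]
      have : |1 + (a0 + a1) - a0| = 1 + a1 := by
        rw [show (1 + (a0 + a1) - a0) = 1 + a1 by ring, abs_of_pos (by linarith)]
      rw [this]
    have habsR : ‖1 + ((‖v 1‖ : ℂ) / v 1) * z 1‖ ≤ 1 + w 1 := by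
      calc ‖1 + ((‖v 1‖ : ℂ) / v 1) * z 1‖
          ≤ ‖(1:ℂ)‖ + ‖((‖v 1‖ : ℂ) / v 1) * z 1‖ :=
            norm_add_le _ _
        _ = 1 + w 1 := by rw [norm_one, abs_coeff hv 1, hzw 1]
    have : (1 + a1) / a0 * w 0 ≤ 1 + w 1 := by rw [← habsL, heq]; exact habsR
    calc (1 + a1) * w 0 = ((1 + a1) / a0 * w 0) * a0 := by field_simp
      _ ≤ (1 + w 1) * a0 := by
          apply mul_le_mul_of_nonneg_right this ha0p.le
      _ = a0 * (1 + w 1) := by ring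
  -- Inequality III : (1 + a0) * w 1 ≤ a1 * (1 + w 0), from g₂.
  have III : (1 + a0) * w 1 ≤ a1 * (1 + w 0) := by
    obtain ⟨z, hzw, hz2⟩ := key 2
    have hz2' : gj v 1 z = 0 := hz2
    unfold gj at hz2'
    have her : (Finset.univ.erase (1 : Fin 2)) = {0} := by decide
    rw [her, Finset.sum_singleton] at hz2'
    have heq : (((1 + norm0 v - a1 : ℝ) : ℂ) / v 1) * z 1
        = 1 + ((‖v 0‖ : ℂ) / v 0) * z 0 := by
      linear_combination -hz2'
    have habsL : ‖(((1 + norm0 v - a1 : ℝ) : ℂ) / v 1) * z 1‖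
        = (1 + a0) / a1 * w 1 := by
      rw [norm_mul, norm_div, Complex.norm_real, Real.norm_eq_abs, hzw 1]
      rw [hs]
      have : |1 + (a0 + a1) - a1| = 1 + a0 := by
        rw [show (1 + (a0 + a1) - a1) = 1 + a0 by ring, abs_of_pos (by linarith)]
      rw [this]
    have habsR : ‖1 + ((‖v 0‖ : ℂ) / v 0) * z 0‖ ≤ 1 + w 0 := by
      calc ‖1 + ((‖v 0‖ : ℂ) / v 0) * z 0‖
          ≤ ‖(1:ℂ)‖ + ‖((‖v 0‖ : ℂ) / v 0) * z 0‖ :=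
            norm_add_le _ _
        _ = 1 + w 0 := by rw [norm_one, abs_coeff hv 0, hzw 0]
    have : (1 + a0) / a1 * w 1 ≤ 1 + w 0 := by rw [← habsL, heq]; exact habsR
    calc (1 + a0) * w 1 = ((1 + a0) / a1 * w 1) * a1 := by field_simp
      _ ≤ (1 + w 0) * a1 := by
          apply mul_le_mul_of_nonneg_right this ha1p.le
      _ = a1 * (1 + w 0) := by ring
  -- conclude w 0 = a0, w 1 = a1
  have hsum : w 0 + w 1 = a0 + a1 := by nlinarith [II, III, I]
  have hle0 : w 0 * (1 + a0 + a1) ≤ a0 * (1 + a0 + a1) := by nlinarith [II, hsum]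
  have hle1 : w 1 * (1 + a0 + a1) ≤ a1 * (1 + a0 + a1) := by nlinarith [III, hsum]
  have hpos : (0 : ℝ) < 1 + a0 + a1 := by linarith
  have hw0a : w 0 ≤ a0 := le_of_mul_le_mul_right (by linarith [hle0]) hpos
  have hw1a : w 1 ≤ a1 := le_of_mul_le_mul_right (by linarith [hle1]) hpos
  have he0 : w 0 = a0 := by linarith
  have he1 : w 1 = a1 := by linarith
  funext k
  fin_cases k
  · have : Real.log (w 0) = x 0 := Real.log_exp _
    show x 0 = Log v 0
    unfold Log
    rw [← ha0, ← he0, this]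
  · have : Real.log (w 1) = x 1 := Real.log_exp _
    show x 1 = Log v 1
    unfold Log
    rw [← ha1, ← he1, this]

theorem example_two_points (v1 v2 : Fin 2 → ℂ)
    (hv1 : ∀ k, v1 k ≠ 0) (hv2 : ∀ k, v2 k ≠ 0) (hne : v1 ≠ v2) :
    (⋂ j : Fin 3, ⋂ r : Fin 3, amoeba (fun z => gfam v1 j z * gfam v2 r z))
      = {Log v1, Log v2} ∧
    ∀ j r : Fin 3, gfam v1 j v1 * gfam v2 r v1 = 0 ∧ gfam v1 j v2 * gfam v2 r v2 = 0 := by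
  constructor
  · apply Set.eq_of_subset_of_subset
    · intro x hx
      simp only [Set.mem_iInter] at hx
      by_cases h1 : ∀ j : Fin 3, x ∈ amoeba (gfam v1 j)
      · exact Or.inl (nisse hv1 x h1)
      · push_neg at h1
        obtain ⟨j0, hj0⟩ := h1
        refine Or.inr (nisse hv2 x fun r => ?_)
        rcases amoeba_mul_subset _ _ (hx j0 r) with h | h
        · exact absurd h hj0
        · exact h
    · intro x hx
      simp only [Set.mem_iInter]
      intro j r
      simp only [Set.mem_insert_iff, Set.mem_singleton_iff] at hx
      rcases hx with rfl | rfl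
      · exact ⟨v1, ⟨hv1, by show gfam v1 j v1 * gfam v2 r v1 = 0; rw [gfam_root hv1 j, zero_mul]⟩, rfl⟩
      · exact ⟨v2, ⟨hv2, by show gfam v1 j v2 * gfam v2 r v2 = 0; rw [gfam_root hv2 r, mul_zero]⟩, rfl⟩
  · intro j r
    exact ⟨by show gfam v1 j v1 * gfam v2 r v1 = 0; rw [gfam_root hv1 j, zero_mul],
      by show gfam v1 j v2 * gfam v2 r v2 = 0; rw [gfam_root hv2 r, mul_zero]⟩
end
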